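/- For any x ∈ ℝⁿ with action gap δ = max_i x_i − max{x_j : x_j < max_i x_i} (δ = ∞ when all entries are equal), the ℓ₁ distance between softmax_h(x) and argmax-e(x) equals 2·Σ_{i : x_i < x_max} e^{h(x_i)} / (m·e^{h(x_max)} + Σ_{i : x_i < x_max} e^{h(x_i)}), where m is the number of maximizers, and this quantity is at most 2n·e^{−c'δ} whenever c'(a−b) ≤ h(a) − h(b) for all a ≥ b. -/

import Mathlib

open Real Finset

noncomputable def softmaxH {n : ℕ} (h : ℝ → ℝ) (x : EuclideanSpace ℝ (Fin n)) :
    EuclideanSpace ℝ (Fin n) :=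
  WithLp.toLp 2 (fun i => Real.exp (h (x i)) / ∑ j, Real.exp (h (x j)))

noncomputable def maxVal {n : ℕ} [NeZero n] (x : EuclideanSpace ℝ (Fin n)) : ℝ :=
  Finset.univ.sup' Finset.univ_nonempty x

/-- Indices strictly below the maximum. -/
noncomputable def subMax {n : ℕ} [NeZero n] (x : EuclideanSpace ℝ (Fin n)) : Finset (Fin n) :=
  Finset.univ.filter (fun j => x j < maxVal x)

/-- Indices achieving the maximum. -/
noncomputable def argmaxSet {n : ℕ} [NeZero n] (x : EuclideanSpace ℝ (Fin n)) : Finset (Fin n) :=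
  Finset.univ.filter (fun j => x j = maxVal x)

noncomputable def argmaxE {n : ℕ} [NeZero n] (x : EuclideanSpace ℝ (Fin n)) :
    EuclideanSpace ℝ (Fin n) :=
  WithLp.toLp 2 (fun i => if x i = maxVal x then (1 : ℝ) / (argmaxSet x).card else 0)

/-- Explicit ℓ₁ computation of the distance between `softmax_h` and `argmax-e`, and the
exponential action-gap bound. -/
theorem stmt_4 {n : ℕ} [NeZero n] (h : ℝ → ℝ) (c' : ℝ)
    (x : EuclideanSpace ℝ (Fin n)) :
    (∑ i, |softmaxH h x i - argmaxE x i|) =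
      2 * (∑ i ∈ subMax x, Real.exp (h (x i))) /
        ((argmaxSet x).card * Real.exp (h (maxVal x)) + ∑ i ∈ subMax x, Real.exp (h (x i))) ∧
    ((∀ a b : ℝ, b ≤ a → c' * (a - b) ≤ h a - h b) →
      ∀ hne : (subMax x).Nonempty,
        2 * (∑ i ∈ subMax x, Real.exp (h (x i))) /
            ((argmaxSet x).card * Real.exp (h (maxVal x)) +
              ∑ i ∈ subMax x, Real.exp (h (x i))) ≤
          2 * n * Real.exp (-c' * (maxVal x - (subMax x).sup' hne x))) := by
  classical
  have hmax_le : ∀ i : Fin n, x i ≤ maxVal x := fun i =>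
    Finset.le_sup' x (Finset.mem_univ i)
  have hargmax_ne : (argmaxSet x).Nonempty := by
    obtain ⟨i, -, hi⟩ := Finset.exists_mem_eq_sup' (Finset.univ_nonempty) x
    exact ⟨i, by simp [argmaxSet, hi.symm, maxVal]⟩
  set E := Real.exp (h (maxVal x)) with hE
  set S := ∑ i ∈ subMax x, Real.exp (h (x i)) with hS
  set m : ℕ := (argmaxSet x).card with hm
  have hmpos : 0 < (m : ℝ) := by
    exact_mod_cast Finset.card_pos.2 hargmax_ne
  have hEpos : 0 < E := Real.exp_pos _
  have hSnn : 0 ≤ S := Finset.sum_nonneg fun i _ => (Real.exp_pos _).le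
  have hDpos : 0 < (m : ℝ) * E + S := by positivity
  have hsub_eq : (Finset.univ.filter (fun j : Fin n => ¬ x j = maxVal x)) = subMax x := by
    apply Finset.filter_congr
    intro j _
    simp only [eq_iff_iff]
    constructor
    · intro hne; exact lt_of_le_of_ne (hmax_le j) hne
    · exact ne_of_lt
  have hsplit : ∀ f : Fin n → ℝ,
      (∑ i, f i) = (∑ i ∈ argmaxSet x, f i) + ∑ i ∈ subMax x, f i := by
    intro f
    rw [← hsub_eq, ← Finset.sum_filter_add_sum_filter_not Finset.univ
      (fun j => x j = maxVal x) f]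
    rfl
  have htot : (∑ j, Real.exp (h (x j))) = (m : ℝ) * E + S := by
    rw [hsplit]
    congr 1
    rw [Finset.sum_congr rfl (fun i hi => by
      rw [(Finset.mem_filter.1 hi).2]), Finset.sum_const, nsmul_eq_mul]
  set D := (m : ℝ) * E + S with hD
  have part1 : (∑ i, |softmaxH h x i - argmaxE x i|) = 2 * S / D := by
    rw [hsplit]
    have h1 : (∑ i ∈ argmaxSet x, |softmaxH h x i - argmaxE x i|) = S / D := by
      have : ∀ i ∈ argmaxSet x, |softmaxH h x i - argmaxE x i| = S / ((m : ℝ) * D) := by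
        intro i hi
        have hxi : x i = maxVal x := (Finset.mem_filter.1 hi).2
        have : softmaxH h x i - argmaxE x i = -(S / ((m : ℝ) * D)) := by
          simp only [softmaxH, argmaxE, PiLp.toLp_apply, htot, hxi, if_pos rfl, if_true, ← hE, ← hm, ← hD]
          field_simp
          ring
        rw [this, abs_neg, abs_of_nonneg (by positivity)]
      rw [Finset.sum_congr rfl this, Finset.sum_const, nsmul_eq_mul, ← hm]
      field_simp
    have h2 : (∑ i ∈ subMax x, |softmaxH h x i - argmaxE x i|) = S / D := by
      have : ∀ i ∈ subMax x, |softmaxH h x i - argmaxE x i| = Real.exp (h (x i)) / D := by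
        intro i hi
        have hxi : x i < maxVal x := (Finset.mem_filter.1 hi).2
        have hne : ¬ x i = maxVal x := ne_of_lt hxi
        simp only [softmaxH, argmaxE, PiLp.toLp_apply, htot, if_neg hne, sub_zero, ← hD]
        rw [abs_of_nonneg (by positivity)]
      rw [Finset.sum_congr rfl this, ← Finset.sum_div]
    rw [h1, h2]; ring
  refine ⟨part1, ?_⟩
  intro hc hne
  set δ := maxVal x - (subMax x).sup' hne x with hδ
  have hδpos : 0 < δ := by
    obtain ⟨i, hi, hxi⟩ := Finset.exists_mem_eq_sup' hne x
    have : x i < maxVal x := (Finset.mem_filter.1 hi).2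
    simp only [hδ, ← hxi]
    linarith
  have hn1 : (1 : ℝ) ≤ (n : ℝ) := by
    exact_mod_cast Nat.one_le_iff_ne_zero.2 (NeZero.ne n)
  rcases le_or_gt 0 c' with hc0 | hc0
  · -- c' ≥ 0
    have hterm : ∀ i ∈ subMax x, Real.exp (h (x i)) ≤ E * Real.exp (-c' * δ) := by
      intro i hi
      have hxi : x i ≤ maxVal x := hmax_le i
      have h1 : c' * (maxVal x - x i) ≤ h (maxVal x) - h (x i) := hc _ _ hxi
      have h2 : δ ≤ maxVal x - x i := by
        have := Finset.le_sup' x hi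
        simp only [hδ]; linarith
      have h3 : -c' * δ ≥ -c' * (maxVal x - x i) := by nlinarith
      calc Real.exp (h (x i)) ≤ Real.exp (h (maxVal x) - c' * (maxVal x - x i)) := by
            apply Real.exp_le_exp.2; linarith
        _ = E * Real.exp (-c' * (maxVal x - x i)) := by
            rw [hE, ← Real.exp_add]; ring_nf
        _ ≤ E * Real.exp (-c' * δ) := by
            apply mul_le_mul_of_nonneg_left (Real.exp_le_exp.2 (by linarith)) hEpos.le
    have hSle : S ≤ (n : ℝ) * (E * Real.exp (-c' * δ)) := by
      calc S ≤ ∑ _i ∈ subMax x, E * Real.exp (-c' * δ) := Finset.sum_le_sum hterm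
        _ = ((subMax x).card : ℝ) * (E * Real.exp (-c' * δ)) := by
            rw [Finset.sum_const, nsmul_eq_mul]
        _ ≤ (n : ℝ) * (E * Real.exp (-c' * δ)) := by
            apply mul_le_mul_of_nonneg_right _ (by positivity)
            exact_mod_cast Finset.card_le_card (Finset.filter_subset _ _) |>.trans
              (le_of_eq (Finset.card_univ (α := Fin n) ▸ Fintype.card_fin n))
    have hED : E ≤ D := by
      have : (1 : ℝ) ≤ (m : ℝ) := by exact_mod_cast Finset.card_pos.2 hargmax_ne
      nlinarith
    calc 2 * S / D ≤ 2 * ((n : ℝ) * (E * Real.exp (-c' * δ))) / E := by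
          apply div_le_div₀ (by positivity) (by linarith) hEpos hED
      _ = 2 * n * Real.exp (-c' * δ) := by field_simp
  · -- c' < 0
    have hexp1 : (1 : ℝ) ≤ Real.exp (-c' * δ) := by
      apply Real.one_le_exp; nlinarith
    have hlt : 2 * S / D ≤ 2 := by
      rw [div_le_iff₀ hDpos]
      have : 0 < (m:ℝ) * E := by positivity
      nlinarith
    calc 2 * S / D ≤ 2 := hlt
      _ ≤ 2 * n * Real.exp (-c' * δ) := by nlinarith
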